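/- Let X be a metric space, Y a Banach space, and φ : X → Set Y a lower semicontinuous map with nonempty closed convex values admitting a continuous selection f₀. Then for every x ∈ X and every y ∈ φ(x) and every ε > 0, there exists a continuous selection f of φ with ‖f(x) − y‖ < ε. -/

import Mathlib

open Set Metric

/-- Approximate selection for an LSC convex-valued map. -/
lemma approx_selection {X : Type*} [MetricSpace X]
    {Y : Type*} [NormedAddCommGroup Y] [NormedSpace ℝ Y]
    (φ : X → Set Y)
    (hlsc : ∀ U : Set Y, IsOpen U → IsOpen {x | (φ x ∩ U).Nonempty})
    (hne : ∀ x, (φ x).Nonempty)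
    (hcv : ∀ x, Convex ℝ (φ x))
    {ε : ℝ} (hε : 0 < ε) :
    ∃ f : X → Y, Continuous f ∧ ∀ z, ∃ w ∈ φ z, ‖f z - w‖ < ε := by
  choose yp hyp using hne
  set U : X → Set X := fun p => {z | (φ z ∩ Metric.ball (yp p) (ε/2)).Nonempty} with hU
  have hUo : ∀ p, IsOpen (U p) := fun p => hlsc _ Metric.isOpen_ball
  have hUmem : ∀ p, p ∈ U p := fun p =>
    ⟨yp p, hyp p, by simp [Metric.mem_ball, half_pos hε]⟩
  obtain ⟨ρ, hρ⟩ := PartitionOfUnity.exists_isSubordinate isClosed_univ U hUo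
    (fun z _ => Set.mem_iUnion.2 ⟨z, hUmem z⟩)
  refine ⟨fun z => ∑ᶠ p, ρ p z • yp p, ?_, ?_⟩
  · exact hρ.continuous_finsum_smul hUo (fun p => continuousOn_const)
  · intro z
    have hsub : ∀ p ∈ ρ.finsupport z, (φ z ∩ Metric.ball (yp p) (ε/2)).Nonempty := by
      intro p hp
      exact hρ p (subset_tsupport _ ((ρ.mem_finsupport z).1 hp))
    have hw : ∀ p : X, ∃ w ∈ φ z, p ∈ ρ.finsupport z → ‖yp p - w‖ < ε/2 := by
      intro p
      by_cases hp : p ∈ ρ.finsupport z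
      · obtain ⟨w, hw1, hw2⟩ := hsub p hp
        refine ⟨w, hw1, fun _ => ?_⟩
        rw [Metric.mem_ball] at hw2
        rwa [← dist_eq_norm, dist_comm]
      · exact ⟨yp z, hyp z, fun h => absurd h hp⟩
    choose w hw1 hw2 using hw
    refine ⟨∑ p ∈ ρ.finsupport z, ρ p z • w p, ?_, ?_⟩
    · exact (hcv z).sum_mem (fun p _ => ρ.nonneg p z)
        (ρ.sum_finsupport (Set.mem_univ z)) (fun p _ => hw1 p)
    · have hfin : (∑ᶠ p, ρ p z • yp p) = ∑ p ∈ ρ.finsupport z, ρ p z • yp p :=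
        (ρ.sum_finsupport_smul_eq_finsum (fun p _ => yp p)).symm
      show ‖(∑ᶠ p, ρ p z • yp p) - ∑ p ∈ ρ.finsupport z, ρ p z • w p‖ < ε
      rw [hfin, ← Finset.sum_sub_distrib]
      have hterm : ∀ p ∈ ρ.finsupport z,
          ‖ρ p z • yp p - ρ p z • w p‖ ≤ ρ p z * (ε/2) := by
        intro p hp
        rw [← smul_sub, norm_smul, Real.norm_of_nonneg (ρ.nonneg p z)]
        exact mul_le_mul_of_nonneg_left (hw2 p hp).le (ρ.nonneg p z)
      calc ‖∑ p ∈ ρ.finsupport z, (ρ p z • yp p - ρ p z • w p)‖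
          ≤ ∑ p ∈ ρ.finsupport z, ‖ρ p z • yp p - ρ p z • w p‖ := norm_sum_le _ _
        _ ≤ ∑ p ∈ ρ.finsupport z, ρ p z * (ε/2) := Finset.sum_le_sum hterm
        _ = (∑ p ∈ ρ.finsupport z, ρ p z) * (ε/2) := by rw [Finset.sum_mul]
        _ = ε/2 := by rw [ρ.sum_finsupport (Set.mem_univ z), one_mul]
        _ < ε := half_lt_self hε

/-- Refinement step: improve an approximate selection without moving it too much. -/
lemma approx_selection_near {X : Type*} [MetricSpace X]
    {Y : Type*} [NormedAddCommGroup Y] [NormedSpace ℝ Y]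
    (φ : X → Set Y)
    (hlsc : ∀ U : Set Y, IsOpen U → IsOpen {x | (φ x ∩ U).Nonempty})
    (hcv : ∀ x, Convex ℝ (φ x))
    (g : X → Y) (hg : Continuous g) {δ : ℝ} (hδ : 0 < δ)
    (hgφ : ∀ z, ∃ w ∈ φ z, ‖g z - w‖ < δ) {ε : ℝ} (hε : 0 < ε) :
    ∃ f : X → Y, Continuous f ∧ (∀ z, ∃ w ∈ φ z, ‖f z - w‖ < ε) ∧
      ∀ z, ‖f z - g z‖ < δ + ε := by
  set ψ : X → Set Y := fun z => φ z ∩ Metric.ball (g z) δ with hψ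
  have hψne : ∀ z, (ψ z).Nonempty := by
    intro z
    obtain ⟨w, hw1, hw2⟩ := hgφ z
    exact ⟨w, hw1, by rw [Metric.mem_ball, dist_eq_norm, ← norm_sub_rev]; exact hw2⟩
  have hψcv : ∀ z, Convex ℝ (ψ z) := fun z => (hcv z).inter (convex_ball _ _)
  have hψlsc : ∀ U : Set Y, IsOpen U → IsOpen {z | (ψ z ∩ U).Nonempty} := by
    intro U hUo
    rw [isOpen_iff_mem_nhds]
    rintro z₀ ⟨w, ⟨hwφ, hwb⟩, hwU⟩
    rw [Metric.mem_ball] at hwb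
    obtain ⟨r₁, hr₁, hr₁U⟩ := Metric.isOpen_iff.1 hUo w hwU
    set d := dist w (g z₀) with hd
    have hdd : 0 < (δ - d)/2 := by
      have : 0 ≤ d := dist_nonneg
      linarith
    set r := min r₁ ((δ - d)/2) with hr
    have hrpos : 0 < r := lt_min hr₁ hdd
    have hV1 : IsOpen {z | (φ z ∩ Metric.ball w r).Nonempty} := hlsc _ Metric.isOpen_ball
    have hV2 : IsOpen (g ⁻¹' Metric.ball (g z₀) ((δ - d)/2)) :=
      Metric.isOpen_ball.preimage hg
    have hmem : z₀ ∈ {z | (φ z ∩ Metric.ball w r).Nonempty} ∩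
        g ⁻¹' Metric.ball (g z₀) ((δ - d)/2) := by
      refine ⟨⟨w, hwφ, Metric.mem_ball_self hrpos⟩, ?_⟩
      simp [Metric.mem_ball, hdd]
    refine Filter.mem_of_superset (((hV1.inter hV2).mem_nhds hmem)) ?_
    rintro z ⟨⟨w', hw'φ, hw'b⟩, hzg⟩
    rw [Metric.mem_ball] at hw'b
    rw [Set.mem_preimage, Metric.mem_ball] at hzg
    refine ⟨w', ⟨hw'φ, ?_⟩, hr₁U (by rw [Metric.mem_ball]; exact lt_of_lt_of_le hw'b (min_le_left _ _))⟩
    rw [Metric.mem_ball]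
    have h1 : dist w' (g z) ≤ dist w' w + dist w (g z₀) + dist (g z₀) (g z) :=
      dist_triangle4 _ _ _ _
    have h2 : dist w' w < (δ - d)/2 := lt_of_lt_of_le hw'b (min_le_right _ _)
    have h3 : dist (g z₀) (g z) < (δ - d)/2 := by rwa [dist_comm]
    linarith
  obtain ⟨f, hfc, hfψ⟩ := approx_selection ψ hψlsc hψne hψcv hε
  refine ⟨f, hfc, ?_, ?_⟩
  · intro z
    obtain ⟨w, ⟨hw1, _⟩, hw3⟩ := hfψ z
    exact ⟨w, hw1, hw3⟩
  · intro z
    obtain ⟨w, ⟨_, hw2⟩, hw3⟩ := hfψ z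
    rw [Metric.mem_ball, dist_eq_norm] at hw2
    calc ‖f z - g z‖ ≤ ‖f z - w‖ + ‖w - g z‖ := norm_sub_le_norm_sub_add_norm_sub _ _ _
      _ < ε + δ := add_lt_add hw3 hw2
      _ = δ + ε := add_comm _ _

/-- Michael's selection theorem for LSC closed-convex-valued maps on a metric space. -/
lemma michael_selection {X : Type*} [MetricSpace X]
    {Y : Type*} [NormedAddCommGroup Y] [NormedSpace ℝ Y] [CompleteSpace Y]
    (φ : X → Set Y)
    (hlsc : ∀ U : Set Y, IsOpen U → IsOpen {x | (φ x ∩ U).Nonempty})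
    (hne : ∀ x, (φ x).Nonempty)
    (hcl : ∀ x, IsClosed (φ x))
    (hcv : ∀ x, Convex ℝ (φ x)) :
    ∃ f : X → Y, Continuous f ∧ ∀ z, f z ∈ φ z := by
  set P : ℕ → (X → Y) → Prop :=
    fun n g => Continuous g ∧ ∀ z, ∃ w ∈ φ z, ‖g z - w‖ < (1/2 : ℝ)^n with hP
  have base : ∃ g, P 0 g := by
    obtain ⟨g, hg1, hg2⟩ := approx_selection φ hlsc hne hcv (ε := 1) one_pos
    exact ⟨g, hg1, by simpa using hg2⟩
  have step : ∀ n, ∀ s : {g // P n g},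
      ∃ g' : {g // P (n+1) g},
        ∀ z, ‖g'.val z - s.val z‖ < (1/2:ℝ)^n + (1/2:ℝ)^(n+1) := by
    rintro n ⟨g, hgc, hgφ⟩
    obtain ⟨g', h1, h2, h3⟩ := approx_selection_near φ hlsc hcv g hgc
      (δ := (1/2:ℝ)^n) (by positivity) hgφ (ε := (1/2:ℝ)^(n+1)) (by positivity)
    exact ⟨⟨g', h1, h2⟩, h3⟩
  set F : ∀ n, {g // P n g} := fun n =>
    Nat.rec ⟨base.choose, base.choose_spec⟩ (fun n s => (step n s).choose) n with hF
  have hstep : ∀ n z, ‖(F (n+1)).1 z - (F n).1 z‖ < (1/2:ℝ)^n + (1/2:ℝ)^(n+1) :=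
    fun n z => (step n (F n)).choose_spec z
  have hdist : ∀ n z, dist ((F n).1 z) ((F (n+1)).1 z) ≤ 2 * (1/2:ℝ)^n := by
    intro n z
    rw [dist_comm, dist_eq_norm]
    have := hstep n z
    have h2 : (1/2:ℝ)^(n+1) ≤ (1/2:ℝ)^n :=
      pow_le_pow_of_le_one (by norm_num) (by norm_num) (Nat.le_succ n)
    linarith
  have hcauchy : ∀ z, CauchySeq (fun n => (F n).1 z) :=
    fun z => cauchySeq_of_le_geometric (1/2) 2 (by norm_num) (fun n => hdist n z)
  have hlim : ∀ z, ∃ l, Filter.Tendsto (fun n => (F n).1 z) Filter.atTop (nhds l) :=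
    fun z => cauchySeq_tendsto_of_complete (hcauchy z)
  choose f hf using hlim
  have hbound : ∀ n z, dist ((F n).1 z) (f z) ≤ 2 * (1/2:ℝ)^n / (1 - 1/2) :=
    fun n z => dist_le_of_le_geometric_of_tendsto (1/2) 2 (by norm_num)
      (fun m => hdist m z) (hf z) n
  have hbound' : ∀ n z, dist ((F n).1 z) (f z) ≤ 4 * (1/2:ℝ)^n := by
    intro n z
    have := hbound n z
    have : 2 * (1/2:ℝ)^n / (1 - 1/2) = 4 * (1/2:ℝ)^n := by ring
    linarith [hbound n z, this ▸ hbound n z]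
  have htends0 : Filter.Tendsto (fun n : ℕ => 4 * (1/2:ℝ)^n) Filter.atTop (nhds 0) := by
    simpa using (tendsto_pow_atTop_nhds_zero_of_lt_one (by norm_num : (0:ℝ) ≤ 1/2)
      (by norm_num)).const_mul 4
  have hunif : TendstoUniformly (fun n z => (F n).1 z) f Filter.atTop := by
    rw [Metric.tendstoUniformly_iff]
    intro ε hε
    filter_upwards [htends0.eventually (gt_mem_nhds hε)] with n hn z
    rw [dist_comm]
    exact lt_of_le_of_lt (hbound' n z) hn
  have hfc : Continuous f :=
    hunif.continuous (Filter.Eventually.of_forall (fun n => (F n).2.1)).frequently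
  refine ⟨f, hfc, ?_⟩
  intro z
  have hwn : ∀ n, ∃ w ∈ φ z, ‖(F n).1 z - w‖ < (1/2:ℝ)^n := fun n => (F n).2.2 z
  choose w hw1 hw2 using hwn
  have hwtend : Filter.Tendsto w Filter.atTop (nhds (f z)) := by
    rw [tendsto_iff_dist_tendsto_zero]
    have hb : ∀ n, dist (w n) (f z) ≤ 5 * (1/2:ℝ)^n := by
      intro n
      calc dist (w n) (f z) ≤ dist (w n) ((F n).1 z) + dist ((F n).1 z) (f z) :=
            dist_triangle _ _ _
        _ ≤ (1/2:ℝ)^n + 4 * (1/2:ℝ)^n := by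
            refine add_le_add ?_ (hbound' n z)
            rw [dist_comm, dist_eq_norm]
            exact (hw2 n).le
        _ = 5 * (1/2:ℝ)^n := by ring
    refine squeeze_zero (fun n => dist_nonneg) hb ?_
    simpa using (tendsto_pow_atTop_nhds_zero_of_lt_one (by norm_num : (0:ℝ) ≤ 1/2)
      (by norm_num)).const_mul 5
  exact (hcl z).mem_of_tendsto hwtend (Filter.Eventually.of_forall hw1)

/-- Pointwise density of continuous selections in the values of an LSC
convex-valued map on a metric domain. -/
theorem dense_family_of_selections
    {X : Type*} [MetricSpace X]
    {Y : Type*} [NormedAddCommGroup Y] [NormedSpace ℝ Y] [CompleteSpace Y]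
    (φ : X → Set Y)
    (hlsc : ∀ U : Set Y, IsOpen U → IsOpen {x | (φ x ∩ U).Nonempty})
    (hne : ∀ x, (φ x).Nonempty)
    (hcl : ∀ x, IsClosed (φ x))
    (hcv : ∀ x, Convex ℝ (φ x))
    (f₀ : X → Y) (hf₀ : Continuous f₀) (hf₀sel : ∀ x, f₀ x ∈ φ x) :
    ∀ x : X, ∀ y ∈ φ x, ∀ ε : ℝ, 0 < ε →
      ∃ f : X → Y, Continuous f ∧ (∀ z, f z ∈ φ z) ∧ ‖f x - y‖ < ε := by
  classical
  intro x y hy ε hε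
  set ψ : X → Set Y := fun z => if z = x then {y} else φ z with hψ
  have hψx : ψ x = {y} := by simp [hψ]
  have hψz : ∀ z, z ≠ x → ψ z = φ z := fun z h => by simp [hψ, h]
  have hψne : ∀ z, (ψ z).Nonempty := by
    intro z
    by_cases h : z = x
    · subst h; rw [hψx]; exact ⟨y, rfl⟩
    · rw [hψz z h]; exact hne z
  have hψcl : ∀ z, IsClosed (ψ z) := by
    intro z
    by_cases h : z = x
    · subst h; rw [hψx]; exact isClosed_singleton
    · rw [hψz z h]; exact hcl z
  have hψcv : ∀ z, Convex ℝ (ψ z) := by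
    intro z
    by_cases h : z = x
    · subst h; rw [hψx]; exact convex_singleton y
    · rw [hψz z h]; exact hcv z
  have hψlsc : ∀ U : Set Y, IsOpen U → IsOpen {z | (ψ z ∩ U).Nonempty} := by
    intro U hU
    by_cases hyU : y ∈ U
    · have heq : {z | (ψ z ∩ U).Nonempty} = {z | (φ z ∩ U).Nonempty} := by
        ext z
        by_cases h : z = x
        · subst h
          simp only [Set.mem_setOf_eq, hψx]
          exact ⟨fun _ => ⟨y, hy, hyU⟩, fun _ => ⟨y, rfl, hyU⟩⟩
        · rw [Set.mem_setOf_eq, hψz z h]; rfl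
      rw [heq]; exact hlsc U hU
    · have heq : {z | (ψ z ∩ U).Nonempty} = {z | (φ z ∩ U).Nonempty} ∩ {x}ᶜ := by
        ext z
        by_cases h : z = x
        · subst h
          simp only [Set.mem_setOf_eq, hψx, Set.mem_inter_iff, Set.mem_compl_iff,
            Set.mem_singleton_iff]
          constructor
          · rintro ⟨w, hw1, hw2⟩
            rw [Set.mem_singleton_iff] at hw1
            exact absurd (hw1 ▸ hw2) hyU
          · rintro ⟨_, hc⟩; exact absurd trivial hc
        · simp only [Set.mem_setOf_eq, hψz z h, Set.mem_inter_iff, Set.mem_compl_iff,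
            Set.mem_singleton_iff]
          exact ⟨fun hh => ⟨hh, h⟩, fun hh => hh.1⟩
      rw [heq]
      exact (hlsc U hU).inter isClosed_singleton.isOpen_compl
  obtain ⟨f, hfc, hfsel⟩ := michael_selection ψ hψlsc hψne hψcl hψcv
  have hfx : f x = y := by
    have := hfsel x
    rwa [hψx, Set.mem_singleton_iff] at this
  refine ⟨f, hfc, ?_, ?_⟩
  · intro z
    by_cases h : z = x
    · subst h; rw [hfx]; exact hy
    · have := hfsel z; rwa [hψz z h] at this
  · simp [hfx, hε]
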